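/- With ℋ as in the context, assume A·B divides 2·(A'·B·u + A·B'·v) and set w̌ = w + u + v − 2·(A'·B·u + A·B'·v)/(A·B). Let ℋ̌ denote the formal Laurent series over ℚ whose coefficient of q^N equals the (finite) sum Σ (−1)^{κ·m + λ·n} over all pairs (m, n) ∈ ℤ² satisfying A·M·m(m−1)/2 + (A−A')·M·m + B·M·n(n−1)/2 + (B−B')·M·n + u·m + v·n + w̌ = N. Set d* = gcd(u, v, M), d = gcd(u, v), d_u = gcd(u, M), d_v = gcd(v, M); assume (u, v) ≠ (0, 0) and that d* divides w. Let K be an integer such that M/d* divides K − 1 and d/gcd(u, v, w) divides K. Assume further: d*·A·B divides 2·(A'·B·u + A·B'·v); d_u·(A·v² + B·u²) divides A·v·d·M; d_v·(A·v² + B·u²) divides B·u·d·M; A·(A·v² + B·u²) divides B·(A − 2A')·u² + A·(B − 2B')·u·v + 2·A·B·u·w·K; and B·(A·v² + B·u²) divides B·(A − 2A')·u·v + A·(B − 2B')·v² + 2·A·B·v·w·K. Set ε = −κ·(B·(A − 2A')·u² + A·(B − 2B')·u·v + 2·A·B·u·w·K)/(A·(A·v² + B·u²)) − λ·(B·(A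 − 2A')·u·v + A·(B − 2B')·v² + 2·A·B·v·w·K)/(B·(A·v² + B·u²)). Then H_M(ℋ) = (−1)^ε · H_M(ℋ̌). -/

import Mathlib

noncomputable section

open scoped Classical

namespace ThetaVanish

/-- A subset of `ℤ` that is bounded below is partially well-ordered. -/
theorem isPWO_of_subset_Ici {a : ℤ} {s : Set ℤ} (h : s ⊆ Set.Ici a) : s.IsPWO := by
  have hWF : s.IsWF := by
    rw [Set.isWF_iff_no_descending_seq]
    intro f hf hmem
    have key : ∀ n : ℕ, f n + n ≤ f 0 := by
      intro n
      induction n with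
      | zero => simp
      | succ k ih =>
        have h2 : f (k + 1) < f k := hf (Nat.lt_succ_self k)
        push_cast
        push_cast at ih
        omega
    have h1 := key (f 0 - a + 1).toNat
    have h2 : a ≤ f ((f 0 - a + 1).toNat) := h (hmem _)
    have h3 : a ≤ f 0 := h (hmem 0)
    omega
  exact hWF.isPWO

theorem quad_bound (P cm m c1 : ℤ) (hP : 1 ≤ P) (h2 : m * (m - 1) = 2 * c1) :
    -(2 * cm - 1) ^ 2 ≤ P * c1 + cm * m := by
  have h0 : 0 ≤ c1 := by
    rcases le_or_gt 1 m with h | h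
    · nlinarith
    · nlinarith
  nlinarith [sq_nonneg (2 * m + 2 * cm - 1), sq_nonneg (2 * cm - 1),
    mul_nonneg (show (0:ℤ) ≤ P - 1 by omega) h0]

/-- The coefficient of `q^N` in the double theta-type series `ℋ`:
the (finite) sum of `(-1)^{κ m + λ n}` over all pairs `(m, n) ∈ ℤ²` with
`A·M·m(m-1)/2 + A'·M·m + B·M·n(n-1)/2 + B'·M·n + u·m + v·n + w = N`. -/
def HHcoeff (M A B A' B' u v w : ℤ) (κ lam : ℕ) : ℤ → ℚ := fun N =>
  ∑ᶠ p : ℤ × ℤ,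
    if A * M * (p.1 * (p.1 - 1) / 2) + A' * M * p.1 + B * M * (p.2 * (p.2 - 1) / 2)
        + B' * M * p.2 + u * p.1 + v * p.2 + w = N
    then (-1 : ℚ) ^ ((κ : ℤ) * p.1 + (lam : ℤ) * p.2) else 0

theorem HHcoeff_support (M A B A' B' u v w : ℤ) (κ lam : ℕ)
    (hM : 0 < M) (hA : 0 < A) (hB : 0 < B) :
    Function.support (HHcoeff M A B A' B' u v w κ lam) ⊆
      Set.Ici (w - (2 * (A' * M + u) - 1) ^ 2 - (2 * (B' * M + v) - 1) ^ 2) := by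
  intro N hN
  simp only [Function.mem_support, ne_eq] at hN
  rw [Set.mem_Ici]
  by_contra hcon
  push_neg at hcon
  apply hN
  apply finsum_eq_zero_of_forall_eq_zero
  rintro ⟨m, n⟩
  rw [if_neg]
  intro hQ
  simp only at hQ
  obtain ⟨c, hc⟩ := Int.even_mul_pred_self m
  obtain ⟨e, he⟩ := Int.even_mul_pred_self n
  have hc' : m * (m - 1) = 2 * c := by omega
  have he' : n * (n - 1) = 2 * e := by omega
  have e1 : m * (m - 1) / 2 = c := by omega
  have e2 : n * (n - 1) / 2 = e := by omega
  rw [e1, e2] at hQ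
  have hb1 : -(2 * (A' * M + u) - 1) ^ 2 ≤ (A * M) * c + (A' * M + u) * m :=
    quad_bound (A * M) (A' * M + u) m c (by nlinarith) hc'
  have hb2 : -(2 * (B' * M + v) - 1) ^ 2 ≤ (B * M) * e + (B' * M + v) * n :=
    quad_bound (B * M) (B' * M + v) n e (by nlinarith) he'
  nlinarith [hb1, hb2]

/-- The double theta-type series `ℋ` determined by the data
`M, A, B, A', B', u, v, w, κ, λ` (junk value `0` unless `M, A, B ≥ 1`). -/
def HH (M A B A' B' u v w : ℤ) (κ lam : ℕ) : LaurentSeries ℚ :=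
  if h : 0 < M ∧ 0 < A ∧ 0 < B then
    { coeff := HHcoeff M A B A' B' u v w κ lam
      isPWO_support' :=
        isPWO_of_subset_Ici (HHcoeff_support M A B A' B' u v w κ lam h.1 h.2.1 h.2.2) }
  else 0

/-- The huffing operator `H_M`. -/
def huff (M : ℤ) (G : LaurentSeries ℚ) : LaurentSeries ℚ where
  coeff N := if M ∣ N then G.coeff N else 0
  isPWO_support' := by
    apply Set.IsPWO.mono G.isPWO_support
    intro N hN
    simp only [Function.mem_support, ne_eq] at hN
    rw [HahnSeries.mem_support]
    by_cases hd : M ∣ N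
    · rwa [if_pos hd] at hN
    · exact absurd (if_neg hd) hN


lemma neg_one_zpow_congr {α : Type*} [DivisionRing α] {a b : ℤ} (h : (2:ℤ) ∣ a - b) :
    (-1 : α) ^ a = (-1 : α) ^ b := by
  obtain ⟨k, hk⟩ := h
  have : a = b + 2 * k := by omega
  rw [this, zpow_add₀ (by norm_num : (-1 : α) ≠ 0), zpow_mul]
  norm_num

lemma lcm_step (d M g : ℤ) (h1 : d ∣ g) (h2 : M ∣ g) :
    d * M ∣ (Int.gcd d M : ℤ) * g := by
  obtain ⟨t, ht⟩ := Int.coe_lcm_dvd h1 h2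
  have habs : (Int.gcd d M : ℤ) * (Int.lcm d M : ℤ) = ((d*M).natAbs : ℤ) := by
    rw [Int.natAbs_mul]
    exact_mod_cast congrArg (Nat.cast : ℕ → ℤ) (Int.gcd_mul_lcm d M)
  have hdvd : d * M ∣ (Int.gcd d M : ℤ) * (Int.lcm d M : ℤ) := by
    rw [habs]; exact Int.dvd_natAbs.mpr dvd_rfl
  calc d * M ∣ (Int.gcd d M : ℤ) * (Int.lcm d M : ℤ) := hdvd
    _ ∣ (Int.gcd d M : ℤ) * g := by rw [ht, ← mul_assoc]; exact Dvd.intro t rfl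

lemma core_dvd (G xg d M dstar c g : ℤ) (hc : xg * G ∣ c * d * M) (hxg : dstar ∣ xg)
    (hdstar0 : dstar ≠ 0) (hdM : d * M ∣ dstar * g) : G ∣ c * g := by
  obtain ⟨e, he⟩ := hxg
  have h2 : xg * G ∣ dstar * (c * g) := by
    calc xg * G ∣ c * d * M := hc
      _ ∣ c * (dstar * g) := by rw [mul_assoc]; exact mul_dvd_mul_left c hdM
      _ = dstar * (c * g) := by ring
  rw [he, mul_assoc] at h2
  have h3 : e * G ∣ c * g := (mul_dvd_mul_iff_left hdstar0).mp h2
  exact dvd_trans (Dvd.intro_left e rfl) h3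

lemma d_dvd_E (A B u v d E G : ℤ) (hG : G = A*v^2 + B*u^2) (hG0 : G ≠ 0)
    (hdu : d ∣ u) (hdv : d ∣ v) (hd0 : d ≠ 0)
    (h1 : G ∣ B*u*E) (h2 : G ∣ A*v*E) : d ∣ E := by
  obtain ⟨u1, hu1⟩ := hdu
  obtain ⟨v1, hv1⟩ := hdv
  set G1 : ℤ := A*v1^2 + B*u1^2 with hG1
  have hGd : G = d^2 * G1 := by rw [hG, hu1, hv1, hG1]; ring
  have hG10 : G1 ≠ 0 := by
    intro h; rw [hGd, h, mul_zero] at hG0; exact hG0 rfl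
  have e1 : d * G1 ∣ B * u1 * E := by
    have : d * (d * G1) ∣ d * (B * u1 * E) := by
      have := h1; rw [hGd, hu1] at this
      calc d * (d * G1) = d^2 * G1 := by ring
        _ ∣ B * (d * u1) * E := this
        _ = d * (B * u1 * E) := by ring
    exact (mul_dvd_mul_iff_left hd0).mp this
  have e2 : d * G1 ∣ A * v1 * E := by
    have : d * (d * G1) ∣ d * (A * v1 * E) := by
      have := h2; rw [hGd, hv1] at this
      calc d * (d * G1) = d^2 * G1 := by ring
        _ ∣ A * (d * v1) * E := this
        _ = d * (A * v1 * E) := by ring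
    exact (mul_dvd_mul_iff_left hd0).mp this
  have e3 : d * G1 ∣ G1 * E := by
    have hcomb : G1 * E = u1 * (B * u1 * E) + v1 * (A * v1 * E) := by rw [hG1]; ring
    rw [hcomb]
    exact dvd_add (Dvd.dvd.mul_left e1 u1) (Dvd.dvd.mul_left e2 v1)
  obtain ⟨t, ht⟩ := e3
  have : G1 * E = G1 * (d * t) := by rw [ht]; ring
  exact ⟨t, mul_left_cancel₀ hG10 this⟩

lemma uq_vq (G u v A B Z q1 q2 : ℤ) (hG0 : G ≠ 0) (hG : G = A*v^2 + B*u^2)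
    (hq1 : G*q1 = B*u*Z) (hq2 : G*q2 = A*v*Z) : u*q1 + v*q2 = Z := by
  have h : G*(u*q1 + v*q2) = G*Z := by
    have : G*(u*q1+v*q2) = u*(G*q1) + v*(G*q2) := by ring
    rw [this, hq1, hq2, hG]; ring
  exact mul_left_cancel₀ hG0 h

lemma Zswap (G u v A B Z P P' q1 q2 m n : ℤ) (hG0 : G ≠ 0) (hG : G = A*v^2 + B*u^2)
    (hZ : Z = 2*(u*m+v*n) + P - u - v) (hq1 : G*q1 = B*u*Z) (hq2 : G*q2 = A*v*Z)
    (hPP' : P + P' = 2*(u+v)) :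
    2*(u*(q1-m)+v*(q2-n)) + P' - u - v = Z := by
  have huq : u*q1 + v*q2 = Z := uq_vq G u v A B Z q1 q2 hG0 hG hq1 hq2
  linear_combination 2*huq + hZ + hPP'

lemma value_id (M A B A' B' u v w P G Z q1 q2 m n c e c' e' N : ℤ)
    (hABM0 : 8*A*B*M ≠ 0) (hG0 : G ≠ 0)
    (hG : G = A*v^2 + B*u^2) (hP : A*B*P = 2*(A'*B*u + A*B'*v))
    (hZ : Z = 2*(u*m+v*n) + P - u - v)
    (hq1 : G*q1 = B*u*Z) (hq2 : G*q2 = A*v*Z)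
    (hc : m*(m-1) = 2*c) (he : n*(n-1) = 2*e)
    (hc' : (q1-m)*(q1-m-1) = 2*c') (he' : (q2-n)*(q2-n-1) = 2*e')
    (hval : A*M*c + A'*M*m + B*M*e + B'*M*n + u*m + v*n + w = N) :
    A*M*c' + (A-A')*M*(q1-m) + B*M*e' + (B-B')*M*(q2-n) + u*(q1-m) + v*(q2-n)
      + (w+u+v-P) = N := by
  have h1 : B*(2*A*M*m + (2*A'*M + 2*u - A*M))^2 + A*(2*B*M*n + (2*B'*M + 2*v - B*M))^2
      = 8*A*B*M*(N - w) + B*(2*A'*M + 2*u - A*M)^2 + A*(2*B'*M + 2*v - B*M)^2 := by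
    linear_combination 8*A*B*M*hval + 4*A^2*B*M^2*hc + 4*A*B^2*M^2*he
  have h2 : G*(2*A*M*(q1-m) + (A*M - 2*A'*M + 2*u))
      = 2*u*(B*u*(2*A*M*m + (2*A'*M + 2*u - A*M)) + A*v*(2*B*M*n + (2*B'*M + 2*v - B*M)))
        - G*(2*A*M*m + (2*A'*M + 2*u - A*M)) := by
    linear_combination 2*A*M*hq1 + 2*A*B*M*u*hZ + 2*u*M*hP + 4*u*hG
  have h3 : G*(2*B*M*(q2-n) + (B*M - 2*B'*M + 2*v))
      = 2*v*(B*u*(2*A*M*m + (2*A'*M + 2*u - A*M)) + A*v*(2*B*M*n + (2*B'*M + 2*v - B*M)))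
        - G*(2*B*M*n + (2*B'*M + 2*v - B*M)) := by
    linear_combination 2*B*M*hq2 + 2*A*B*M*v*hZ + 2*v*M*hP + 4*v*hG
  have h4 : G^2*(B*(2*A*M*(q1-m) + (A*M - 2*A'*M + 2*u))^2
        + A*(2*B*M*(q2-n) + (B*M - 2*B'*M + 2*v))^2)
      = G^2*(B*(2*A*M*m + (2*A'*M + 2*u - A*M))^2
        + A*(2*B*M*n + (2*B'*M + 2*v - B*M))^2) := by
    linear_combination (B*(G*(2*A*M*(q1-m) + (A*M - 2*A'*M + 2*u))
        + (2*u*(B*u*(2*A*M*m + (2*A'*M + 2*u - A*M)) + A*v*(2*B*M*n + (2*B'*M + 2*v - B*M)))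
        - G*(2*A*M*m + (2*A'*M + 2*u - A*M)))))*h2
      + (A*(G*(2*B*M*(q2-n) + (B*M - 2*B'*M + 2*v))
        + (2*v*(B*u*(2*A*M*m + (2*A'*M + 2*u - A*M)) + A*v*(2*B*M*n + (2*B'*M + 2*v - B*M)))
        - G*(2*B*M*n + (2*B'*M + 2*v - B*M)))))*h3
      + (-4*(B*u*(2*A*M*m + (2*A'*M + 2*u - A*M)) + A*v*(2*B*M*n + (2*B'*M + 2*v - B*M)))^2)*hG
  have h5 : B*(2*A*M*(q1-m) + (A*M - 2*A'*M + 2*u))^2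
        + A*(2*B*M*(q2-n) + (B*M - 2*B'*M + 2*v))^2
      = 8*A*B*M*(N - (w+u+v-P)) + B*(A*M - 2*A'*M + 2*u)^2 + A*(B*M - 2*B'*M + 2*v)^2 := by
    have hG2 : G^2 ≠ 0 := pow_ne_zero 2 hG0
    apply mul_left_cancel₀ hG2
    rw [h4]
    linear_combination G^2*h1 + (-8*M*G^2)*hP
  have h6 : 8*A*B*M*(A*M*c' + (A-A')*M*(q1-m) + B*M*e' + (B-B')*M*(q2-n) + u*(q1-m)
      + v*(q2-n) + (w+u+v-P)) = 8*A*B*M*N := by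
    linear_combination h5 - 4*A^2*B*M^2*hc' - 4*A*B^2*M^2*he'
  exact mul_left_cancel₀ hABM0 h6

lemma Msol_of (M A B A' B' u v w N m n c e : ℤ) (hMN : M ∣ N)
    (hc : m * (m - 1) = 2 * c) (he : n * (n - 1) = 2 * e)
    (hsol : A*M*c + A'*M*m + B*M*e + B'*M*n + u*m + v*n + w = N) :
    M ∣ u*m + v*n + w := by
  obtain ⟨N', hN'⟩ := hMN
  exact ⟨N' - A*c - A'*m - B*e - B'*n, by linear_combination hsol + hN'⟩

/-- One direction of the solution-set bijection. -/
lemma mapping_side (M A B A' B' u v w P G N : ℤ)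
    (hABM0 : 8*A*B*M ≠ 0) (hG0 : G ≠ 0)
    (hG : G = A*v^2 + B*u^2) (hP : A*B*P = 2*(A'*B*u + A*B'*v)) (hMN : M ∣ N)
    (hZdvd : ∀ m n : ℤ, M ∣ u*m + v*n + w →
      G ∣ B*u*(2*(u*m+v*n) + P - u - v) ∧ G ∣ A*v*(2*(u*m+v*n) + P - u - v))
    (m n : ℤ)
    (hsol : A*M*(m*(m-1)/2) + A'*M*m + B*M*(n*(n-1)/2) + B'*M*n + u*m + v*n + w = N) :
    A*M*((B*u*(2*(u*m+v*n) + P - u - v)/G - m)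
        * ((B*u*(2*(u*m+v*n) + P - u - v)/G - m) - 1) / 2)
      + (A-A')*M*(B*u*(2*(u*m+v*n) + P - u - v)/G - m)
      + B*M*((A*v*(2*(u*m+v*n) + P - u - v)/G - n)
        * ((A*v*(2*(u*m+v*n) + P - u - v)/G - n) - 1) / 2)
      + (B-B')*M*(A*v*(2*(u*m+v*n) + P - u - v)/G - n)
      + u*(B*u*(2*(u*m+v*n) + P - u - v)/G - m)
      + v*(A*v*(2*(u*m+v*n) + P - u - v)/G - n)
      + (w+u+v-P) = N := by
  obtain ⟨cc, hcc⟩ := Int.even_mul_pred_self m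
  obtain ⟨ee, hee⟩ := Int.even_mul_pred_self n
  have hc : m * (m - 1) = 2 * cc := by omega
  have he : n * (n - 1) = 2 * ee := by omega
  have ec : m * (m - 1) / 2 = cc := by omega
  have ed : n * (n - 1) / 2 = ee := by omega
  rw [ec, ed] at hsol
  have hMsol : M ∣ u*m + v*n + w := Msol_of M A B A' B' u v w N m n cc ee hMN hc he hsol
  obtain ⟨hdvd1, hdvd2⟩ := hZdvd m n hMsol
  have hq1 : G * (B*u*(2*(u*m+v*n) + P - u - v)/G) = B*u*(2*(u*m+v*n) + P - u - v) :=
    Int.mul_ediv_cancel' hdvd1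
  have hq2 : G * (A*v*(2*(u*m+v*n) + P - u - v)/G) = A*v*(2*(u*m+v*n) + P - u - v) :=
    Int.mul_ediv_cancel' hdvd2
  set q1 : ℤ := B*u*(2*(u*m+v*n) + P - u - v)/G with hq1d
  set q2 : ℤ := A*v*(2*(u*m+v*n) + P - u - v)/G with hq2d
  obtain ⟨cc', hcc'⟩ := Int.even_mul_pred_self (q1 - m)
  obtain ⟨ee', hee'⟩ := Int.even_mul_pred_self (q2 - n)
  have hc' : (q1-m) * (q1-m-1) = 2 * cc' := by omega
  have he' : (q2-n) * (q2-n-1) = 2 * ee' := by omega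
  have ec' : (q1-m) * ((q1-m) - 1) / 2 = cc' := by omega
  have ed' : (q2-n) * ((q2-n) - 1) / 2 = ee' := by omega
  rw [ec', ed']
  exact value_id M A B A' B' u v w P G (2*(u*m+v*n) + P - u - v) q1 q2 m n cc ee cc' ee' N
    hABM0 hG0 hG hP rfl hq1 hq2 hc he hc' he' hsol

lemma coord_sq_bound (P cm m c U : ℤ) (hP : 1 ≤ P) (hc : m*(m-1) = 2*c) (h : P*c + cm*m ≤ U) :
    (2*m + 2*cm - 1)^2 ≤ 8*U + (2*cm-1)^2 := by
  have h0 : 0 ≤ c := by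
    rcases le_or_gt 1 m with h | h
    · nlinarith
    · nlinarith
  nlinarith [mul_nonneg (show (0:ℤ) ≤ P - 1 by omega) h0]

lemma interval_of_sq (t S : ℤ) (h : t^2 ≤ S) (ht : t % 2 = 1 ∨ t % 2 = -1) :
    -S ≤ t ∧ t ≤ S := by
  have ht0 : t ≠ 0 := by omega
  rcases le_or_gt 1 t with h1 | h1
  · exact ⟨by nlinarith, by nlinarith⟩
  · have h1' : t ≤ -1 := by omega
    exact ⟨by nlinarith, by nlinarith⟩

lemma sols_finite (M A B A' B' u v w N : ℤ) (hM : 1 ≤ M) (hA : 1 ≤ A) (hB : 1 ≤ B) :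
    {p : ℤ × ℤ | A * M * (p.1 * (p.1 - 1) / 2) + A' * M * p.1 + B * M * (p.2 * (p.2 - 1) / 2)
        + B' * M * p.2 + u * p.1 + v * p.2 + w = N}.Finite := by
  set S1 : ℤ := 8*(N - w + (2*(B'*M+v)-1)^2) + (2*(A'*M+u)-1)^2 with hS1
  set S2 : ℤ := 8*(N - w + (2*(A'*M+u)-1)^2) + (2*(B'*M+v)-1)^2 with hS2
  apply Set.Finite.subset (Set.Finite.prod (Set.finite_Icc (-S1 - (A'*M+u)) (S1 - (A'*M+u) + 1))
    (Set.finite_Icc (-S2 - (B'*M+v)) (S2 - (B'*M+v) + 1)))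
  rintro ⟨m, n⟩ hp
  simp only [Set.mem_setOf_eq] at hp
  obtain ⟨c, hcc⟩ := Int.even_mul_pred_self m
  obtain ⟨e, hee⟩ := Int.even_mul_pred_self n
  have hc : m * (m - 1) = 2 * c := by omega
  have he : n * (n - 1) = 2 * e := by omega
  have e1 : m * (m - 1) / 2 = c := by omega
  have e2 : n * (n - 1) / 2 = e := by omega
  rw [e1, e2] at hp
  have hb2 : -(2 * (B' * M + v) - 1) ^ 2 ≤ (B * M) * e + (B' * M + v) * n :=
    quad_bound (B * M) (B' * M + v) n e (by nlinarith) he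
  have hb1 : -(2 * (A' * M + u) - 1) ^ 2 ≤ (A * M) * c + (A' * M + u) * m :=
    quad_bound (A * M) (A' * M + u) m c (by nlinarith) hc
  have hexp1 : (A'*M+u)*m = A'*M*m + u*m := by ring
  have hexp2 : (B'*M+v)*n = B'*M*n + v*n := by ring
  have hU1 : (A*M)*c + (A'*M+u)*m ≤ N - w + (2*(B'*M+v)-1)^2 := by linarith
  have hU2 : (B*M)*e + (B'*M+v)*n ≤ N - w + (2*(A'*M+u)-1)^2 := by linarith
  have hq1 := coord_sq_bound (A*M) (A'*M+u) m c (N - w + (2*(B'*M+v)-1)^2)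
    (by nlinarith) hc hU1
  have hq2 := coord_sq_bound (B*M) (B'*M+v) n e (N - w + (2*(A'*M+u)-1)^2)
    (by nlinarith) he hU2
  have hi1 := interval_of_sq _ _ hq1 (by omega)
  have hi2 := interval_of_sq _ _ hq2 (by omega)
  have hS1nn : 0 ≤ S1 := le_trans (sq_nonneg _) hq1
  have hS2nn : 0 ≤ S2 := le_trans (sq_nonneg _) hq2
  constructor
  · simp only [Set.mem_Icc]
    exact ⟨by linarith [hi1.1], by linarith [hi1.2]⟩
  · simp only [Set.mem_Icc]
    exact ⟨by linarith [hi2.1], by linarith [hi2.2]⟩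

lemma huff_coeff (M : ℤ) (G : LaurentSeries ℚ) (N : ℤ) :
    (huff M G).coeff N = if M ∣ N then G.coeff N else 0 := rfl

lemma HH_coeff (M A B A' B' u v w : ℤ) (κ lam : ℕ) (hM : 0 < M) (hA : 0 < A) (hB : 0 < B) :
    (HH M A B A' B' u v w κ lam).coeff = HHcoeff M A B A' B' u v w κ lam := by
  rw [HH, dif_pos ⟨hM, hA, hB⟩]

/-- **Theorem (the second cancelation)**: `H_M(ℋ) = (-1)^ε · H_M(ℋ̌)`. -/
theorem statement19 (M A B A' B' u v w : ℤ) (hM : 1 ≤ M) (hA : 1 ≤ A) (hB : 1 ≤ B)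
    (κ lam : ℕ) (hκ : κ = 0 ∨ κ = 1) (hlam : lam = 0 ∨ lam = 1)
    (hABdvd : A * B ∣ 2 * (A' * B * u + A * B' * v))
    (wcheck : ℤ) (hwcheck : wcheck = w + u + v - 2 * (A' * B * u + A * B' * v) / (A * B))
    (dstar d du dv : ℤ)
    (hdstar : dstar = (Int.gcd (Int.gcd u v : ℤ) M : ℤ))
    (hd : d = (Int.gcd u v : ℤ))
    (hdu : du = (Int.gcd u M : ℤ)) (hdv : dv = (Int.gcd v M : ℤ))
    (huv : (u, v) ≠ (0, 0))
    (hw : dstar ∣ w)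
    (K : ℤ) (hK1 : M / dstar ∣ K - 1)
    (hK2 : d / (Int.gcd (Int.gcd u v : ℤ) w : ℤ) ∣ K)
    (c1 : dstar * A * B ∣ 2 * (A' * B * u + A * B' * v))
    (c2 : du * (A * v ^ 2 + B * u ^ 2) ∣ A * v * d * M)
    (c3 : dv * (A * v ^ 2 + B * u ^ 2) ∣ B * u * d * M)
    (c4 : A * (A * v ^ 2 + B * u ^ 2) ∣
      B * (A - 2 * A') * u ^ 2 + A * (B - 2 * B') * u * v + 2 * A * B * u * w * K)
    (c5 : B * (A * v ^ 2 + B * u ^ 2) ∣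
      B * (A - 2 * A') * u * v + A * (B - 2 * B') * v ^ 2 + 2 * A * B * v * w * K)
    (eps : ℤ)
    (heps : eps =
      -(κ : ℤ) * ((B * (A - 2 * A') * u ^ 2 + A * (B - 2 * B') * u * v
            + 2 * A * B * u * w * K)
          / (A * (A * v ^ 2 + B * u ^ 2)))
      - (lam : ℤ) * ((B * (A - 2 * A') * u * v + A * (B - 2 * B') * v ^ 2
            + 2 * A * B * v * w * K)
          / (B * (A * v ^ 2 + B * u ^ 2)))) :
    huff M (HH M A B A' B' u v w κ lam) =
      (-1 : LaurentSeries ℚ) ^ eps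
        * huff M (HH M A B (A - A') (B - B') u v wcheck κ lam) := by
  classical
  have hA0 : A ≠ 0 := by omega
  have hB0 : B ≠ 0 := by omega
  have hAB0 : A*B ≠ 0 := mul_ne_zero hA0 hB0
  have hABM0 : 8*A*B*M ≠ 0 := by
    have : (0:ℤ) < 8*A*B*M :=
      mul_pos (mul_pos (mul_pos (by norm_num : (0:ℤ) < 8) (by omega : (0:ℤ) < A))
        (by omega : (0:ℤ) < B)) (by omega : (0:ℤ) < M)
    omega
  have huv0 : u ≠ 0 ∨ v ≠ 0 := by
    by_contra h
    push_neg at h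
    exact huv (by rw [h.1, h.2])
  set G : ℤ := A*v^2 + B*u^2 with hGdef
  have hGpos : 0 < G := by
    rcases huv0 with h | h
    · have h1 : 0 < B*u^2 := by positivity
      nlinarith [sq_nonneg v]
    · have h1 : 0 < A*v^2 := by positivity
      nlinarith [sq_nonneg u]
  have hG0 : G ≠ 0 := ne_of_gt hGpos
  obtain ⟨P, hPeq⟩ := hABdvd
  have hP : A*B*P = 2*(A'*B*u + A*B'*v) := hPeq.symm
  have hwch : wcheck = w + u + v - P := by
    rw [hwcheck, hPeq, Int.mul_ediv_cancel_left _ hAB0]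
  have hd_u : d ∣ u := by rw [hd]; exact Int.gcd_dvd_left _ _
  have hd_v : d ∣ v := by rw [hd]; exact Int.gcd_dvd_right _ _
  have hd0 : d ≠ 0 := by
    rw [hd]
    intro h
    have h' : Int.gcd u v = 0 := by exact_mod_cast h
    rw [Int.gcd_eq_zero_iff] at h'
    rcases huv0 with h'' | h''
    · exact h'' h'.1
    · exact h'' h'.2
  rw [← hd] at hdstar hK2
  have hds_d : dstar ∣ d := by rw [hdstar]; exact Int.gcd_dvd_left _ _
  have hds_M : dstar ∣ M := by rw [hdstar]; exact Int.gcd_dvd_right _ _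
  have hds0 : dstar ≠ 0 := by
    rw [hdstar]
    intro h
    have h' : Int.gcd d M = 0 := by exact_mod_cast h
    rw [Int.gcd_eq_zero_iff] at h'
    omega
  have hds_u : dstar ∣ u := hds_d.trans hd_u
  have hds_v : dstar ∣ v := hds_d.trans hd_v
  have hds_du : dstar ∣ du := by rw [hdu]; exact Int.dvd_coe_gcd hds_u hds_M
  have hds_dv : dstar ∣ dv := by rw [hdv]; exact Int.dvd_coe_gcd hds_v hds_M
  have hMds : dstar * (M / dstar) = M := Int.mul_ediv_cancel' hds_M
  have hds_P : dstar ∣ P := by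
    have h1 : A*B*dstar ∣ A*B*P := by
      rw [hP]
      calc A*B*dstar = dstar*A*B := by ring
        _ ∣ 2*(A'*B*u + A*B'*v) := c1
    exact (mul_dvd_mul_iff_left hAB0).mp h1
  have hdwK : d ∣ w*K := by
    have hcd : (Int.gcd d w : ℤ) ∣ d := Int.gcd_dvd_left _ _
    have hcw : (Int.gcd d w : ℤ) ∣ w := Int.gcd_dvd_right _ _
    obtain ⟨k, hk⟩ := hK2
    obtain ⟨w2, hw2⟩ := hcw
    have hcdm : (Int.gcd d w : ℤ) * (d / (Int.gcd d w : ℤ)) = d := Int.mul_ediv_cancel' hcd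
    exact ⟨w2*k, by
      linear_combination K*hw2 + ((Int.gcd d w : ℤ)*w2)*hk + (w2*k)*hcdm⟩
  have hBuE : G ∣ B*u*(u + v - P + 2*w*K) := by
    have h4 : A*G ∣ A*(B*u*(u + v - P + 2*w*K)) := by
      have hid : A*(B*u*(u + v - P + 2*w*K))
          = B*(A-2*A')*u^2 + A*(B-2*B')*u*v + 2*A*B*u*w*K := by linear_combination (-u)*hP
      rw [hid]; exact c4
    exact (mul_dvd_mul_iff_left hA0).mp h4
  have hAvE : G ∣ A*v*(u + v - P + 2*w*K) := by
    have h4 : B*G ∣ B*(A*v*(u + v - P + 2*w*K)) := by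
      have hid : B*(A*v*(u + v - P + 2*w*K))
          = B*(A-2*A')*u*v + A*(B-2*B')*v^2 + 2*A*B*v*w*K := by linear_combination (-v)*hP
      rw [hid]; exact c5
    exact (mul_dvd_mul_iff_left hB0).mp h4
  have hdE : d ∣ u + v - P + 2*w*K := d_dvd_E A B u v d _ G hGdef hG0 hd_u hd_v hd0 hBuE hAvE
  have hdP : d ∣ P := by
    have hid : P = u + v + 2*(w*K) - (u + v - P + 2*w*K) := by ring
    rw [hid]
    exact dvd_sub (dvd_add (dvd_add hd_u hd_v) (hdwK.mul_left 2)) hdE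
  have star : ∀ wx S : ℤ, dstar ∣ wx → d ∣ wx*K → d ∣ S → M ∣ S + wx →
      G ∣ B*u*(S + wx*K) ∧ G ∣ A*v*(S + wx*K) := by
    intro wx S hwx1 hwx2 hS1 hS2
    have hdg : d ∣ S + wx*K := dvd_add hS1 hwx2
    have hMg : M ∣ S + wx*K := by
      obtain ⟨t, ht⟩ := hK1
      obtain ⟨w1, hw1⟩ := hwx1
      have h1 : M ∣ wx*(K-1) :=
        ⟨w1*t, by linear_combination wx*ht + ((M/dstar)*t)*hw1 + (w1*t)*hMds⟩
      have h2 : S + wx*K = (S + wx) + wx*(K-1) := by ring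
      rw [h2]; exact dvd_add hS2 h1
    have hlcm : d*M ∣ dstar*(S + wx*K) := by
      have h := lcm_step d M (S + wx*K) hdg hMg
      rwa [← hdstar] at h
    exact ⟨core_dvd G dv d M dstar (B*u) _ c3 hds_dv hds0 hlcm,
           core_dvd G du d M dstar (A*v) _ c2 hds_du hds0 hlcm⟩
  have hMdd : d*M ∣ dstar*(d*(M/dstar)) := ⟨1, by linear_combination d*hMds⟩
  have hBuBase : G ∣ B*u*(d*(M/dstar)) := core_dvd G dv d M dstar (B*u) _ c3 hds_dv hds0 hMdd
  have hAvBase : G ∣ A*v*(d*(M/dstar)) := core_dvd G du d M dstar (A*v) _ c2 hds_du hds0 hMdd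
  obtain ⟨z, hz⟩ : d ∣ u + v - P := dvd_sub (dvd_add hd_u hd_v) hdP
  obtain ⟨t0, ht0⟩ := hK1
  have hBuExtra : G ∣ B*u*((K-1)*(u+v-P)) := by
    obtain ⟨y, hy⟩ := hBuBase
    exact ⟨y*(t0*z), by rw [ht0, hz]; linear_combination (t0*z)*hy⟩
  have hAvExtra : G ∣ A*v*((K-1)*(u+v-P)) := by
    obtain ⟨y, hy⟩ := hAvBase
    exact ⟨y*(t0*z), by rw [ht0, hz]; linear_combination (t0*z)*hy⟩
  have hds_wch : dstar ∣ wcheck := by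
    rw [hwch]
    exact dvd_sub (dvd_add (dvd_add hw hds_u) hds_v) hds_P
  have hdwchK : d ∣ wcheck*K := by
    have hid : wcheck*K = w*K + ((u+v-P)*K) := by rw [hwch]; ring
    rw [hid]
    exact dvd_add hdwK ((dvd_sub (dvd_add hd_u hd_v) hdP).mul_right K)
  have hZdvd1 : ∀ m n : ℤ, M ∣ u*m + v*n + w →
      G ∣ B*u*(2*(u*m+v*n) + P - u - v) ∧ G ∣ A*v*(2*(u*m+v*n) + P - u - v) := by
    intro m n hmn
    have hdS : d ∣ u*m + v*n := dvd_add (hd_u.mul_right m) (hd_v.mul_right n)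
    obtain ⟨h1, h2⟩ := star w (u*m+v*n) hw hdwK hdS hmn
    constructor
    · have hid : B*u*(2*(u*m+v*n) + P - u - v)
          = 2*(B*u*((u*m+v*n) + w*K)) - B*u*(u+v-P+2*w*K) := by ring
      rw [hid]; exact dvd_sub (h1.mul_left 2) hBuE
    · have hid : A*v*(2*(u*m+v*n) + P - u - v)
          = 2*(A*v*((u*m+v*n) + w*K)) - A*v*(u+v-P+2*w*K) := by ring
      rw [hid]; exact dvd_sub (h2.mul_left 2) hAvE
  have hZdvd2 : ∀ m n : ℤ, M ∣ u*m + v*n + wcheck →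
      G ∣ B*u*(2*(u*m+v*n) + (2*(u+v)-P) - u - v)
        ∧ G ∣ A*v*(2*(u*m+v*n) + (2*(u+v)-P) - u - v) := by
    intro m n hmn
    have hdS : d ∣ u*m + v*n := dvd_add (hd_u.mul_right m) (hd_v.mul_right n)
    obtain ⟨h1, h2⟩ := star wcheck (u*m+v*n) hds_wch hdwchK hdS hmn
    constructor
    · have hid : B*u*(2*(u*m+v*n) + (2*(u+v)-P) - u - v)
          = 2*(B*u*((u*m+v*n) + wcheck*K))
            - (B*u*(u+v-P+2*w*K) + 2*(B*u*((K-1)*(u+v-P)))) := by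
        rw [hwch]; ring
      rw [hid]
      exact dvd_sub (h1.mul_left 2) (dvd_add hBuE (hBuExtra.mul_left 2))
    · have hid : A*v*(2*(u*m+v*n) + (2*(u+v)-P) - u - v)
          = 2*(A*v*((u*m+v*n) + wcheck*K))
            - (A*v*(u+v-P+2*w*K) + 2*(A*v*((K-1)*(u+v-P)))) := by
        rw [hwch]; ring
      rw [hid]
      exact dvd_sub (h2.mul_left 2) (dvd_add hAvE (hAvExtra.mul_left 2))
  obtain ⟨e1, he1⟩ := hBuE
  obtain ⟨e2, he2⟩ := hAvE
  have hAG0 : A*G ≠ 0 := mul_ne_zero hA0 hG0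
  have hBG0 : B*G ≠ 0 := mul_ne_zero hB0 hG0
  have heps' : eps = -(κ:ℤ)*e1 - (lam:ℤ)*e2 := by
    rw [heps]
    have h1 : B*(A-2*A')*u^2 + A*(B-2*B')*u*v + 2*A*B*u*w*K = A*G*e1 := by
      linear_combination u*hP + A*he1
    have h2 : B*(A-2*A')*u*v + A*(B-2*B')*v^2 + 2*A*B*v*w*K = B*G*e2 := by
      linear_combination v*hP + B*he2
    rw [h1, h2]
    rw [show A*G*e1 = (A*G)*e1 from rfl, show B*G*e2 = (B*G)*e2 from rfl,
      Int.mul_ediv_cancel_left _ hAG0, Int.mul_ediv_cancel_left _ hBG0]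
  have hP2 : A*B*(2*(u+v)-P) = 2*((A-A')*B*u + A*(B-B')*v) := by linear_combination (-1)*hP
  -- the coefficientwise identity
  have coeff_eq : ∀ N : ℤ, M ∣ N →
      HHcoeff M A B A' B' u v w κ lam N
        = (-1:ℚ)^eps * HHcoeff M A B (A-A') (B-B') u v wcheck κ lam N := by
    intro N hMN
    have hfin1 := sols_finite M A B A' B' u v w N hM hA hB
    have hfin2 := sols_finite M A B (A-A') (B-B') u v wcheck N hM hA hB
    have hsub1 : Function.support (fun p : ℤ×ℤ =>
        if A * M * (p.1 * (p.1 - 1) / 2) + A' * M * p.1 + B * M * (p.2 * (p.2 - 1) / 2)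
          + B' * M * p.2 + u * p.1 + v * p.2 + w = N
        then ((-1 : ℚ) ^ ((κ : ℤ) * p.1 + (lam : ℤ) * p.2)) else 0) ⊆ ↑hfin1.toFinset := by
      intro p hp
      simp only [Function.mem_support, ne_eq] at hp
      rw [Set.Finite.coe_toFinset]
      by_contra h
      exact hp (if_neg h)
    have hsub2 : Function.support (fun p : ℤ×ℤ =>
        if A * M * (p.1 * (p.1 - 1) / 2) + (A-A') * M * p.1 + B * M * (p.2 * (p.2 - 1) / 2)
          + (B-B') * M * p.2 + u * p.1 + v * p.2 + wcheck = N
        then ((-1 : ℚ) ^ ((κ : ℤ) * p.1 + (lam : ℤ) * p.2)) else 0) ⊆ ↑hfin2.toFinset := by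
      intro p hp
      simp only [Function.mem_support, ne_eq] at hp
      rw [Set.Finite.coe_toFinset]
      by_contra h
      exact hp (if_neg h)
    rw [HHcoeff, HHcoeff]
    rw [finsum_eq_sum_of_support_subset _ hsub1, finsum_eq_sum_of_support_subset _ hsub2]
    rw [Finset.mul_sum]
    refine Finset.sum_nbij'
      (fun p => (B*u*(2*(u*p.1+v*p.2) + P - u - v)/G - p.1,
        A*v*(2*(u*p.1+v*p.2) + P - u - v)/G - p.2))
      (fun p => (B*u*(2*(u*p.1+v*p.2) + (2*(u+v)-P) - u - v)/G - p.1,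
        A*v*(2*(u*p.1+v*p.2) + (2*(u+v)-P) - u - v)/G - p.2)) ?_ ?_ ?_ ?_ ?_
    · -- hi : maps s₁ into s₂
      rintro ⟨m, n⟩ hp
      rw [Set.Finite.mem_toFinset] at hp ⊢
      simp only [Set.mem_setOf_eq] at hp ⊢
      have h := mapping_side M A B A' B' u v w P G N hABM0 hG0 hGdef hP hMN hZdvd1 m n hp
      rw [← hwch] at h
      exact h
    · -- hj : maps s₂ into s₁
      rintro ⟨m, n⟩ hp
      rw [Set.Finite.mem_toFinset] at hp ⊢
      simp only [Set.mem_setOf_eq] at hp ⊢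
      have h := mapping_side M A B (A-A') (B-B') u v wcheck (2*(u+v)-P) G N hABM0 hG0 hGdef
        hP2 hMN hZdvd2 m n hp
      rw [show A-(A-A') = A' from by ring, show B-(B-B') = B' from by ring,
        show wcheck+u+v-(2*(u+v)-P) = w from by rw [hwch]; ring] at h
      exact h
    · -- left inverse
      rintro ⟨m, n⟩ hp
      rw [Set.Finite.mem_toFinset] at hp
      simp only [Set.mem_setOf_eq] at hp
      obtain ⟨cc, hcc⟩ := Int.even_mul_pred_self m
      obtain ⟨ee, hee⟩ := Int.even_mul_pred_self n
      have hc : m * (m - 1) = 2 * cc := by omega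
      have he : n * (n - 1) = 2 * ee := by omega
      have ec : m * (m - 1) / 2 = cc := by omega
      have ed : n * (n - 1) / 2 = ee := by omega
      rw [ec, ed] at hp
      have hMsol : M ∣ u*m + v*n + w := Msol_of M A B A' B' u v w N m n cc ee hMN hc he hp
      obtain ⟨hdvd1, hdvd2⟩ := hZdvd1 m n hMsol
      have hq1 : G * (B*u*(2*(u*m+v*n) + P - u - v)/G) = B*u*(2*(u*m+v*n) + P - u - v) :=
        Int.mul_ediv_cancel' hdvd1
      have hq2 : G * (A*v*(2*(u*m+v*n) + P - u - v)/G) = A*v*(2*(u*m+v*n) + P - u - v) :=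
        Int.mul_ediv_cancel' hdvd2
      set q1 : ℤ := B*u*(2*(u*m+v*n) + P - u - v)/G with hq1d
      set q2 : ℤ := A*v*(2*(u*m+v*n) + P - u - v)/G with hq2d
      have hswap := Zswap G u v A B (2*(u*m+v*n) + P - u - v) P (2*(u+v)-P) q1 q2 m n
        hG0 hGdef rfl hq1 hq2 (by ring)
      show (B*u*(2*(u*(q1-m)+v*(q2-n)) + (2*(u+v)-P) - u - v)/G - (q1-m),
        A*v*(2*(u*(q1-m)+v*(q2-n)) + (2*(u+v)-P) - u - v)/G - (q2-n)) = (m, n)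
      rw [hswap, ← hq1d, ← hq2d]
      simp only [Prod.mk.injEq]
      omega
    · -- right inverse
      rintro ⟨m, n⟩ hp
      rw [Set.Finite.mem_toFinset] at hp
      simp only [Set.mem_setOf_eq] at hp
      obtain ⟨cc, hcc⟩ := Int.even_mul_pred_self m
      obtain ⟨ee, hee⟩ := Int.even_mul_pred_self n
      have hc : m * (m - 1) = 2 * cc := by omega
      have he : n * (n - 1) = 2 * ee := by omega
      have ec : m * (m - 1) / 2 = cc := by omega
      have ed : n * (n - 1) / 2 = ee := by omega
      rw [ec, ed] at hp
      have hMsol : M ∣ u*m + v*n + wcheck :=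
        Msol_of M A B (A-A') (B-B') u v wcheck N m n cc ee hMN hc he hp
      obtain ⟨hdvd1, hdvd2⟩ := hZdvd2 m n hMsol
      have hq1 : G * (B*u*(2*(u*m+v*n) + (2*(u+v)-P) - u - v)/G)
          = B*u*(2*(u*m+v*n) + (2*(u+v)-P) - u - v) := Int.mul_ediv_cancel' hdvd1
      have hq2 : G * (A*v*(2*(u*m+v*n) + (2*(u+v)-P) - u - v)/G)
          = A*v*(2*(u*m+v*n) + (2*(u+v)-P) - u - v) := Int.mul_ediv_cancel' hdvd2
      set q1 : ℤ := B*u*(2*(u*m+v*n) + (2*(u+v)-P) - u - v)/G with hq1d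
      set q2 : ℤ := A*v*(2*(u*m+v*n) + (2*(u+v)-P) - u - v)/G with hq2d
      have hswap := Zswap G u v A B (2*(u*m+v*n) + (2*(u+v)-P) - u - v) (2*(u+v)-P) P q1 q2 m n
        hG0 hGdef rfl hq1 hq2 (by ring)
      show (B*u*(2*(u*(q1-m)+v*(q2-n)) + P - u - v)/G - (q1-m),
        A*v*(2*(u*(q1-m)+v*(q2-n)) + P - u - v)/G - (q2-n)) = (m, n)
      rw [hswap, ← hq1d, ← hq2d]
      simp only [Prod.mk.injEq]
      omega
    · -- sign matching
      rintro ⟨m, n⟩ hp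
      beta_reduce
      rw [Set.Finite.mem_toFinset] at hp
      simp only [Set.mem_setOf_eq] at hp
      have himg := mapping_side M A B A' B' u v w P G N hABM0 hG0 hGdef hP hMN hZdvd1 m n hp
      rw [← hwch] at himg
      rw [if_pos hp, if_pos himg]
      obtain ⟨cc, hcc⟩ := Int.even_mul_pred_self m
      obtain ⟨ee, hee⟩ := Int.even_mul_pred_self n
      have hc : m * (m - 1) = 2 * cc := by omega
      have he : n * (n - 1) = 2 * ee := by omega
      have ec : m * (m - 1) / 2 = cc := by omega
      have ed : n * (n - 1) / 2 = ee := by omega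
      have hp' := hp
      rw [ec, ed] at hp'
      have hMsol : M ∣ u*m + v*n + w := Msol_of M A B A' B' u v w N m n cc ee hMN hc he hp'
      obtain ⟨hdvd1, hdvd2⟩ := hZdvd1 m n hMsol
      have hq1 : G * (B*u*(2*(u*m+v*n) + P - u - v)/G) = B*u*(2*(u*m+v*n) + P - u - v) :=
        Int.mul_ediv_cancel' hdvd1
      have hq2 : G * (A*v*(2*(u*m+v*n) + P - u - v)/G) = A*v*(2*(u*m+v*n) + P - u - v) :=
        Int.mul_ediv_cancel' hdvd2
      set q1 : ℤ := B*u*(2*(u*m+v*n) + P - u - v)/G with hq1d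
      set q2 : ℤ := A*v*(2*(u*m+v*n) + P - u - v)/G with hq2d
      have hdS : d ∣ u*m + v*n := dvd_add (hd_u.mul_right m) (hd_v.mul_right n)
      obtain ⟨hg1', hg2'⟩ := star w (u*m+v*n) hw hdwK hdS hMsol
      obtain ⟨g1, hg1⟩ := hg1'
      obtain ⟨g2, hg2⟩ := hg2'
      have hq1e : q1 + e1 = 2*g1 := by
        apply mul_left_cancel₀ hG0
        linear_combination hq1 - he1 + 2*hg1
      have hq2e : q2 + e2 = 2*g2 := by
        apply mul_left_cancel₀ hG0
        linear_combination hq2 - he2 + 2*hg2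
      show (-1:ℚ)^((κ:ℤ)*m + (lam:ℤ)*n)
          = (-1:ℚ)^eps * (-1:ℚ)^((κ:ℤ)*(q1-m) + (lam:ℤ)*(q2-n))
      rw [← zpow_add₀ (show (-1:ℚ) ≠ 0 by norm_num)]
      apply neg_one_zpow_congr
      exact ⟨(κ:ℤ)*m + (lam:ℤ)*n + (κ:ℤ)*e1 + (lam:ℤ)*e2 - (κ:ℤ)*g1 - (lam:ℤ)*g2, by
        rw [heps']; linear_combination -(κ:ℤ)*hq1e - (lam:ℤ)*hq2e⟩
  -- assemble
  have hMp : (0:ℤ) < M := by omega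
  have hAp : (0:ℤ) < A := by omega
  have hBp : (0:ℤ) < B := by omega
  rcases Int.even_or_odd eps with hev | hod
  · have h1 : (-1 : LaurentSeries ℚ)^eps = 1 := by
      obtain ⟨k, hk⟩ := hev
      rw [show eps = 2*k from by omega, zpow_mul]
      norm_num
    have h2 : (-1 : ℚ)^eps = 1 := by
      obtain ⟨k, hk⟩ := hev
      rw [show eps = 2*k from by omega, zpow_mul]
      norm_num
    rw [h1, one_mul]
    ext N
    rw [huff_coeff, huff_coeff, HH_coeff M A B A' B' u v w κ lam hMp hAp hBp,
      HH_coeff M A B (A-A') (B-B') u v wcheck κ lam hMp hAp hBp]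
    split_ifs with h
    · rw [coeff_eq N h, h2, one_mul]
    · rfl
  · have h1 : (-1 : LaurentSeries ℚ)^eps = -1 := by
      obtain ⟨k, hk⟩ := hod
      rw [show eps = 2*k+1 from by omega, zpow_add₀ (by norm_num : (-1 : LaurentSeries ℚ) ≠ 0),
        zpow_mul]
      norm_num
    have h2 : (-1 : ℚ)^eps = -1 := by
      obtain ⟨k, hk⟩ := hod
      rw [show eps = 2*k+1 from by omega, zpow_add₀ (by norm_num : (-1 : ℚ) ≠ 0), zpow_mul]
      norm_num
    rw [h1, show ∀ x : LaurentSeries ℚ, (-1 : LaurentSeries ℚ) * x = -x from fun x => by ring]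
    ext N
    rw [HahnSeries.coeff_neg, huff_coeff, huff_coeff,
      HH_coeff M A B A' B' u v w κ lam hMp hAp hBp,
      HH_coeff M A B (A-A') (B-B') u v wcheck κ lam hMp hAp hBp]
    split_ifs with h
    · rw [coeff_eq N h, h2]; ring
    · rw [neg_zero]

end ThetaVanish
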